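/- Let F ∈ L₁ be non-decreasing with a constant section K (a closed non-degenerate interval on which F is constant). Suppose n ∈ ℕ is minimal such that Fⁿ(K) ∩ (K + ℤ) ≠ ∅. Then there exists ξ ∈ ℝ with Fⁿ(K) = {ξ}, ξ ∈ K + m where m = ⌊ξ − min K⌋ ∈ ℤ, ξ is an n-periodic (mod 1) point of F, and the rotation number satisfies ρ_F = m/n. -/

import Mathlib

open Filter Topology

theorem exact_rotation_number_from_constant_section (F : ℝ → ℝ) (hF : Continuous F)
    (hdeg : ∀ x : ℝ, F (x + 1) = F x + 1) (hmono : Monotone F)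
    (a b : ℝ) (hab : a < b) (hconst : ∀ x ∈ Set.Icc a b, F x = F a)
    (n : ℕ) (hn : 0 < n)
    (hhit : (F^[n] '' Set.Icc a b ∩
      {y : ℝ | ∃ x ∈ Set.Icc a b, ∃ j : ℤ, y = x + j}).Nonempty)
    (hmin : ∀ j : ℕ, 0 < j → j < n →
      F^[j] '' Set.Icc a b ∩ {y : ℝ | ∃ x ∈ Set.Icc a b, ∃ j : ℤ, y = x + j} = ∅) :
    ∃ ξ : ℝ, F^[n] '' Set.Icc a b = {ξ} ∧
      ξ ∈ Set.Icc (a + (⌊ξ - a⌋ : ℝ)) (b + (⌊ξ - a⌋ : ℝ)) ∧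
      (F^[n] ξ = ξ + ⌊ξ - a⌋ ∧
        ∀ j : ℕ, 1 ≤ j → j < n → ¬∃ m : ℤ, F^[j] ξ - ξ = m) ∧
      Tendsto (fun m : ℕ => (F^[m] ξ - ξ) / m) atTop (𝓝 ((⌊ξ - a⌋ : ℝ) / n)) := by
  -- b < a + 1
  have hb1 : b < a + 1 := by
    by_contra h
    push_neg at h
    have h1 : F (a + 1) = F a := hconst _ ⟨by linarith, h⟩
    have h2 := hdeg a
    linarith
  -- F commutes with integer translations
  have hFZ : ∀ (k : ℤ) (x : ℝ), F (x + k) = F x + k := by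
    intro k
    induction k using Int.induction_on with
    | zero => simp
    | succ i ih =>
      intro x
      have h1 := hdeg (x + i)
      have h2 := ih x
      push_cast
      push_cast at h2
      rw [show x + ((i : ℝ) + 1) = x + i + 1 by ring, h1, h2]
      ring
    | pred i ih =>
      intro x
      have h1 := hdeg (x + (-(i : ℝ) - 1))
      have h2 := ih x
      push_cast
      push_cast at h2
      rw [show x + (-(i : ℝ) - 1) + 1 = x + -(i : ℝ) by ring] at h1
      rw [show x + (-(i : ℝ) - 1) = x + (-(i : ℝ) - 1) by rfl]
      linarith
  have hFiterZ : ∀ (j : ℕ) (k : ℤ) (x : ℝ), F^[j] (x + k) = F^[j] x + k := by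
    intro j
    induction j with
    | zero => intro k x; simp
    | succ j ih =>
      intro k x
      rw [Function.iterate_succ_apply, Function.iterate_succ_apply, hFZ k x, ih]
  -- iterates are constant on [a,b]
  have hconstIter : ∀ j : ℕ, 1 ≤ j → ∀ x ∈ Set.Icc a b, F^[j] x = F^[j] a := by
    intro j hj x hx
    obtain ⟨i, rfl⟩ := Nat.exists_eq_add_of_le hj
    rw [show 1 + i = i + 1 from by ring, Function.iterate_succ_apply,
      Function.iterate_succ_apply, hconst x hx]
  set ξ : ℝ := F^[n] a with hξdef
  have haI : a ∈ Set.Icc a b := ⟨le_refl a, hab.le⟩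
  have himg : F^[n] '' Set.Icc a b = {ξ} := by
    apply Set.eq_singleton_iff_unique_mem.mpr
    refine ⟨⟨a, haI, rfl⟩, ?_⟩
    rintro y ⟨x, hx, rfl⟩
    exact hconstIter n hn x hx
  obtain ⟨y, hy1, hy2⟩ := hhit
  rw [himg, Set.mem_singleton_iff] at hy1
  subst hy1
  obtain ⟨x, hx, m, hxm⟩ := hy2
  have hfloor : ⌊ξ - a⌋ = m := by
    rw [Int.floor_eq_iff]
    constructor
    · rw [hxm]; linarith [hx.1]
    · rw [hxm]; push_cast; linarith [hx.2]
  have hFnx : F^[n] x = ξ := hconstIter n hn x hx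
  have hper : F^[n] ξ = ξ + m := by
    rw [hxm, hFiterZ n m x, hFnx, hxm]
  have hnot : ∀ j : ℕ, 1 ≤ j → j < n → ¬∃ k : ℤ, F^[j] ξ - ξ = k := by
    rintro j hj1 hjn ⟨k, hk⟩
    have hFj : F^[j] ξ = F^[j] a + m := by
      rw [hxm, hFiterZ j m x, hconstIter j hj1 x hx]
    have hmem : F^[j] a ∈ F^[j] '' Set.Icc a b ∩
        {y : ℝ | ∃ x ∈ Set.Icc a b, ∃ j : ℤ, y = x + j} := by
      refine ⟨⟨a, haI, rfl⟩, x, hx, k, ?_⟩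
      have : F^[j] a + (m : ℝ) - (x + m) = k := by rw [← hFj, ← hxm]; exact hk
      linarith
    rw [hmin j (by omega) hjn] at hmem
    exact hmem
  -- multiples of n
  have hqn : ∀ q : ℕ, F^[q * n] ξ = ξ + (((q : ℤ) * m : ℤ) : ℝ) := by
    intro q
    induction q with
    | zero => simp
    | succ q ih =>
      have h1 : (q + 1) * n = q * n + n := by ring
      rw [h1, Function.iterate_add_apply, hper, hFiterZ (q * n) m ξ, ih]
      push_cast
      ring
  have hk : ∀ k : ℕ, F^[k] ξ = F^[k % n] ξ + ((((k / n : ℕ) : ℤ) * m : ℤ) : ℝ) := by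
    intro k
    conv_lhs => rw [← Nat.mod_add_div k n]
    rw [Function.iterate_add_apply, mul_comm n (k / n), hqn (k / n),
      hFiterZ (k % n) (((k / n : ℕ) : ℤ) * m) ξ]
  refine ⟨ξ, himg, ?_, ⟨by rw [hfloor]; exact hper, hnot⟩, ?_⟩
  · rw [hfloor]
    constructor
    · rw [hxm]; linarith [hx.1]
    · rw [hxm]; linarith [hx.2]
  · rw [hfloor]
    set C : ℝ := ∑ r ∈ Finset.range n, |F^[r] ξ - ξ| with hCdef
    have hC : ∀ r : ℕ, r < n → |F^[r] ξ - ξ| ≤ C :=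
      fun r hr => Finset.single_le_sum (f := fun r => |F^[r] ξ - ξ|)
        (fun i _ => abs_nonneg _) (Finset.mem_range.mpr hr)
    have hn0 : (n : ℝ) ≠ 0 := Nat.cast_ne_zero.mpr hn.ne'
    have hnpos : (0 : ℝ) < n := Nat.cast_pos.mpr hn
    rw [← tendsto_sub_nhds_zero_iff]
    refine squeeze_zero_norm' ?_ (tendsto_const_div_atTop_nhds_zero_nat (C + |(m : ℝ)|))
    · filter_upwards [eventually_ge_atTop 1] with k hk1
      have hkpos : (0 : ℝ) < k := by exact_mod_cast hk1
      have hkr : (k : ℝ) = ((k / n : ℕ) : ℝ) * n + ((k % n : ℕ) : ℝ) := by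
        exact_mod_cast (Nat.div_add_mod' k n).symm
      set r : ℕ := k % n
      set q : ℕ := k / n
      have hrn : r < n := Nat.mod_lt k hn
      have key : (F^[k] ξ - ξ) / k - (m : ℝ) / n =
          ((F^[r] ξ - ξ) * n - (r : ℝ) * m) / ((k : ℝ) * n) := by
        rw [hk k, div_sub_div _ _ hkpos.ne' hn0]
        congr 1
        rw [hkr]
        simp only [Int.cast_mul, Int.cast_natCast]
        ring
      rw [Real.norm_eq_abs, key, abs_div,
        abs_of_pos (show (0 : ℝ) < (k : ℝ) * n from by positivity)]
      have hnum : |(F^[r] ξ - ξ) * n - (r : ℝ) * m| ≤ (C + |(m : ℝ)|) * n := by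
        calc |(F^[r] ξ - ξ) * n - (r : ℝ) * m|
            ≤ |(F^[r] ξ - ξ) * n| + |(r : ℝ) * m| := abs_sub _ _
          _ = |F^[r] ξ - ξ| * n + (r : ℝ) * |(m : ℝ)| := by
              rw [abs_mul, abs_mul, abs_of_pos hnpos, abs_of_nonneg (by positivity : (0:ℝ) ≤ (r:ℝ))]
          _ ≤ C * n + (n : ℝ) * |(m : ℝ)| := by
              have h1 : |F^[r] ξ - ξ| * n ≤ C * n :=
                mul_le_mul_of_nonneg_right (hC r hrn) hnpos.le
              have h2 : (r : ℝ) * |(m : ℝ)| ≤ (n : ℝ) * |(m : ℝ)| :=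
                mul_le_mul_of_nonneg_right (by exact_mod_cast hrn.le) (abs_nonneg _)
              linarith
          _ = (C + |(m : ℝ)|) * n := by ring
      calc |(F^[r] ξ - ξ) * n - (r : ℝ) * m| / ((k : ℝ) * n)
          ≤ ((C + |(m : ℝ)|) * n) / ((k : ℝ) * n) := by
            gcongr
        _ = (C + |(m : ℝ)|) / k := by
            rw [mul_div_mul_right _ _ hn0]
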